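/- arXiv:2208.10198 — 4 statements merged into one kernel-verified Lean document; each statement's English description precedes it below -/
import Mathlib

section
/- Let λ, μ, ν > 0 with λ < μ and λ+ν ≠ μ, and let π_{n,j} be as in the s̄ = 1 Poisson controller stationary distribution (π_{n,0} = (λ/(λ+ν))^n π_{0,0}, π_{n,1} = [(λ/ν + (λ+ν)/(λ+ν-μ))(λ/μ)^n - ((λ+ν)/(λ+ν-μ))(λ/(λ+ν))^n] π_{0,0}, with π_{0,0} = ν(μ-λ)/(μ(2λ+ν))). Then ∑_{n≥1} π_{n,1} = λ/μ. -/
theorem stmt_9 (lam mu nu : ℝ) (hlam : 0 < lam) (hmu : 0 < mu) (hnu : 0 < nu)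
    (hstab : lam < mu) (hne : lam + nu ≠ mu) :
    let π₀₀ : ℝ := nu * (mu - lam) / (mu * (2 * lam + nu))
    let π1 : ℕ → ℝ := fun n =>
      ((lam / nu + (lam + nu) / (lam + nu - mu)) * (lam / mu) ^ n -
        ((lam + nu) / (lam + nu - mu)) * (lam / (lam + nu)) ^ n) * π₀₀
    ∑' n : ℕ, π1 (n + 1) = lam / mu := by
  intro π₀₀ π1
  set a : ℝ := lam / mu with ha
  set b : ℝ := lam / (lam + nu) with hb
  have ha0 : 0 ≤ a := div_nonneg hlam.le hmu.le
  have ha1 : a < 1 := (div_lt_one hmu).mpr hstab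
  have hb0 : 0 ≤ b := div_nonneg hlam.le (by linarith)
  have hb1 : b < 1 := (div_lt_one (by linarith)).mpr (by linarith)
  set A : ℝ := (lam / nu + (lam + nu) / (lam + nu - mu)) * a * π₀₀ with hA
  set B : ℝ := ((lam + nu) / (lam + nu - mu)) * b * π₀₀ with hB
  have hfun : (fun n : ℕ => π1 (n + 1)) = fun n : ℕ => A * a ^ n - B * b ^ n := by
    funext n
    simp only [π1, pow_succ, hA, hB]
    ring
  rw [hfun]
  have hsa : Summable (fun n : ℕ => A * a ^ n) :=
    (summable_geometric_of_lt_one ha0 ha1).mul_left A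
  have hsb : Summable (fun n : ℕ => B * b ^ n) :=
    (summable_geometric_of_lt_one hb0 hb1).mul_left B
  rw [Summable.tsum_sub hsa hsb, tsum_mul_left, tsum_mul_left,
    tsum_geometric_of_lt_one ha0 ha1, tsum_geometric_of_lt_one hb0 hb1]
  have h1 : (1 : ℝ) - a ≠ 0 := by intro h; nlinarith
  have h2 : (1 : ℝ) - b ≠ 0 := by intro h; nlinarith
  have h3 : lam + nu - mu ≠ 0 := sub_ne_zero.mpr hne
  have h4 : lam + nu ≠ 0 := by positivity
  have h5 : 2 * lam + nu ≠ 0 := by positivity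
  have e1 : (1:ℝ) - a = (mu - lam) / mu := by
    rw [ha]; field_simp
  have e2 : (1:ℝ) - b = nu / (lam + nu) := by
    rw [hb]; field_simp; ring
  have h6 : mu - lam ≠ 0 := sub_ne_zero.mpr hstab.ne'
  rw [e1, e2]
  simp only [hA, hB, ha, hb, π₀₀]
  field_simp
  ring
end

section
/- Let λ, μ, ν > 0 with λ < μ and λ+ν ≠ μ. With the stationary probabilities of the s̄ = 1 Poisson controller model as above, P(S=0) := ∑_{n≥0} π_{n,0} = (μ-λ)(λ+ν)/(μ(2λ+ν)) and P(S=1) := ∑_{n≥0} π_{n,1} = λ(λ+μ+ν)/(μ(2λ+ν)). -/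
theorem stmt_10 (lam mu nu : ℝ) (hlam : 0 < lam) (hmu : 0 < mu) (hnu : 0 < nu)
    (hstab : lam < mu) (hne : lam + nu ≠ mu) :
    let π₀₀ : ℝ := nu * (mu - lam) / (mu * (2 * lam + nu))
    let π0 : ℕ → ℝ := fun n => (lam / (lam + nu)) ^ n * π₀₀
    let π1 : ℕ → ℝ := fun n =>
      ((lam / nu + (lam + nu) / (lam + nu - mu)) * (lam / mu) ^ n -
        ((lam + nu) / (lam + nu - mu)) * (lam / (lam + nu)) ^ n) * π₀₀
    (∑' n : ℕ, π0 n = (mu - lam) * (lam + nu) / (mu * (2 * lam + nu))) ∧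
    (∑' n : ℕ, π1 n = lam * (lam + mu + nu) / (mu * (2 * lam + nu))) := by
  intro π₀₀ π0 π1
  have hln : 0 < lam + nu := by linarith
  have hr1 : 0 ≤ lam / (lam + nu) := by positivity
  have hr1' : lam / (lam + nu) < 1 := (div_lt_one hln).2 (by linarith)
  have hr2 : 0 ≤ lam / mu := by positivity
  have hr2' : lam / mu < 1 := (div_lt_one hmu).2 hstab
  have hs1 : Summable fun n : ℕ => (lam / (lam + nu)) ^ n :=
    summable_geometric_of_lt_one hr1 hr1'
  have hs2 : Summable fun n : ℕ => (lam / mu) ^ n :=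
    summable_geometric_of_lt_one hr2 hr2'
  have ht1 : ∑' n : ℕ, (lam / (lam + nu)) ^ n = (1 - lam / (lam + nu))⁻¹ :=
    tsum_geometric_of_lt_one hr1 hr1'
  have ht2 : ∑' n : ℕ, (lam / mu) ^ n = (1 - lam / mu)⁻¹ :=
    tsum_geometric_of_lt_one hr2 hr2'
  have hne' : lam + nu - mu ≠ 0 := sub_ne_zero.2 hne
  have hmu0 : mu ≠ 0 := ne_of_gt hmu
  have hnu0 : nu ≠ 0 := ne_of_gt hnu
  have hln0 : lam + nu ≠ 0 := ne_of_gt hln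
  have hd : 2 * lam + nu ≠ 0 := by positivity
  have hml : mu - lam ≠ 0 := sub_ne_zero.2 (ne_of_gt hstab)
  constructor
  · have : ∑' n : ℕ, π0 n = (∑' n : ℕ, (lam / (lam + nu)) ^ n) * π₀₀ := by
      simpa [π0] using hs1.tsum_mul_right π₀₀
    rw [this, ht1]
    show (1 - lam / (lam + nu))⁻¹ * (nu * (mu - lam) / (mu * (2 * lam + nu))) = _
    field_simp
    ring
    exact mul_inv_cancel₀ hnu0
  · set A := lam / nu + (lam + nu) / (lam + nu - mu) with hA
    set B := (lam + nu) / (lam + nu - mu) with hB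
    have key : ∑' n : ℕ, π1 n =
        (A * (1 - lam / mu)⁻¹ - B * (1 - lam / (lam + nu))⁻¹) * π₀₀ := by
      rw [show (∑' n : ℕ, π1 n) =
          (∑' n : ℕ, (A * (lam / mu) ^ n - B * (lam / (lam + nu)) ^ n)) * π₀₀ from ?_]
      · rw [Summable.tsum_sub (hs2.mul_left A) (hs1.mul_left B), tsum_mul_left, tsum_mul_left,
          ht1, ht2]
      · simpa [π1] using (((hs2.mul_left A).sub (hs1.mul_left B)).tsum_mul_right π₀₀)
    rw [key]
    show (A * (1 - lam / mu)⁻¹ - B * (1 - lam / (lam + nu))⁻¹) *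
        (nu * (mu - lam) / (mu * (2 * lam + nu))) = _
    rw [hA, hB]
    field_simp
    ring
    field_simp
    ring
end

section
/- Let μ, ν > 0, ρ ≥ 0, and define h(x,y) = ∑_{k=0}^{∞} (ν/(ν+kμ)) (ρ^k/k!) (x-1)^k (y-1)^k. Then for all real x, y, h satisfies the partial differential equation ν h(x,y) + μ(x-1) ∂h/∂x (x,y) = ν e^{ρ(x-1)(y-1)}. -/
theorem stmt_13 (mu nu ρ : ℝ) (hmu : 0 < mu) (hnu : 0 < nu) (hρ : 0 ≤ ρ) :
    let h : ℝ → ℝ → ℝ := fun x y =>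
      ∑' k : ℕ, (nu / (nu + k * mu)) * (ρ ^ k / (Nat.factorial k)) *
        (x - 1) ^ k * (y - 1) ^ k
    ∀ x y : ℝ,
      nu * h x y + mu * (x - 1) * deriv (fun t => h t y) x =
        nu * Real.exp (ρ * (x - 1) * (y - 1)) := by
  intro h x y
  -- setup
  set R : ℝ := |x - 1| + 1 with hR
  have hR1 : (1:ℝ) ≤ R := by have := abs_nonneg (x - 1); linarith
  have hR0 : (0:ℝ) < R := by linarith
  set g : ℕ → ℝ → ℝ := fun n t =>
    (nu / (nu + n * mu)) * (ρ ^ n / (Nat.factorial n)) * (t - 1) ^ n * (y - 1) ^ n with hg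
  set g' : ℕ → ℝ → ℝ := fun n t =>
    (nu / (nu + n * mu)) * (ρ ^ n / (Nat.factorial n)) * (n * (t - 1) ^ (n - 1)) * (y - 1) ^ n
    with hg'
  set u : ℕ → ℝ := fun n =>
    (n : ℝ) * (ρ ^ n / (Nat.factorial n)) * R ^ (n - 1) * |y - 1| ^ n with hu
  have hden : ∀ n : ℕ, (0:ℝ) < nu + n * mu := fun n => by positivity
  have hc1 : ∀ n : ℕ, nu / (nu + n * mu) ≤ 1 := fun n => by
    rw [div_le_one (hden n)]; nlinarith [Nat.cast_nonneg (α := ℝ) n]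
  have hc0 : ∀ n : ℕ, (0:ℝ) ≤ nu / (nu + n * mu) := fun n => by positivity
  -- summability of the bound
  have hU : Summable u := by
    rw [← summable_nat_add_iff 1]
    have : (fun n : ℕ => u (n + 1)) =
        fun n : ℕ => (ρ * |y - 1|) * ((ρ * |y - 1| * R) ^ n / (Nat.factorial n)) := by
      funext n
      simp only [hu, Nat.add_sub_cancel, Nat.factorial_succ, Nat.cast_mul, Nat.cast_add,
        Nat.cast_one, mul_pow]
      field_simp
      ring
    rw [this]
    exact (Real.summable_pow_div_factorial _).mul_left _
  -- derivatives
  have hderivg : ∀ n : ℕ, ∀ t : ℝ, HasDerivAt (g n) (g' n t) t := by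
    intro n t
    have h1 : HasDerivAt (fun t : ℝ => (t - 1) ^ n) ((n : ℝ) * (t - 1) ^ (n - 1)) t := by
      have h0 := ((hasDerivAt_id t).sub_const 1).pow n
      rw [mul_one] at h0
      exact h0
    simpa [hg, hg', mul_comm, mul_assoc, mul_left_comm] using
      ((h1.const_mul ((nu / (nu + n * mu)) * (ρ ^ n / (Nat.factorial n)))).mul_const
        ((y - 1) ^ n))
  -- norm bound on the ball
  have hbound : ∀ n : ℕ, ∀ t ∈ Metric.ball (1:ℝ) R, ‖g' n t‖ ≤ u n := by
    intro n t ht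
    have htR : |t - 1| ≤ R := by
      have := Metric.mem_ball.mp ht
      rw [Real.dist_eq] at this
      linarith
    have habs : ‖g' n t‖ =
        (nu / (nu + n * mu)) * (ρ ^ n / (Nat.factorial n)) * ((n : ℝ) * |t - 1| ^ (n - 1)) *
          |y - 1| ^ n := by
      simp only [hg', Real.norm_eq_abs, abs_mul, abs_pow]
      rw [abs_of_nonneg (hc0 n), abs_of_nonneg (by positivity : (0:ℝ) ≤ ρ ^ n / (Nat.factorial n)),
        Nat.abs_cast]
    rw [habs, hu]
    have h2 : |t - 1| ^ (n - 1) ≤ R ^ (n - 1) :=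
      pow_le_pow_left₀ (abs_nonneg _) htR _
    calc (nu / (nu + n * mu)) * (ρ ^ n / (Nat.factorial n)) * ((n : ℝ) * |t - 1| ^ (n - 1)) *
          |y - 1| ^ n
        ≤ 1 * (ρ ^ n / (Nat.factorial n)) * ((n : ℝ) * R ^ (n - 1)) * |y - 1| ^ n := by
          gcongr
          exact hc1 n
      _ = (n : ℝ) * (ρ ^ n / (Nat.factorial n)) * R ^ (n - 1) * |y - 1| ^ n := by ring
  -- summability at the center point 1
  have hg0 : Summable fun n => g n 1 := by
    apply summable_of_ne_finset_zero (s := {0})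
    intro n hn
    have hn' : n ≠ 0 := by simpa using hn
    simp [hg, zero_pow hn']
  have hx : x ∈ Metric.ball (1:ℝ) R := by
    rw [Metric.mem_ball, Real.dist_eq]; linarith
  have h1mem : (1:ℝ) ∈ Metric.ball (1:ℝ) R := by
    rw [Metric.mem_ball, Real.dist_eq]; simpa using hR0
  -- the key derivative computation
  have hD : HasDerivAt (fun z => ∑' n, g n z) (∑' n, g' n x) x :=
    hasDerivAt_tsum_of_isPreconnected hU Metric.isOpen_ball
      ((convex_ball (1:ℝ) R).isPreconnected) (fun n t _ => hderivg n t) hbound h1mem hg0 hx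
  -- summability of g at x and of g' at x
  have hsumg' : Summable fun n => g' n x :=
    Summable.of_norm_bounded hU (fun n => hbound n x hx)
  have hsumg : Summable fun n => g n x := by
    have := summable_of_summable_hasDerivAt_of_isPreconnected hU Metric.isOpen_ball
      ((convex_ball (1:ℝ) R).isPreconnected) (fun n t _ => hderivg n t) hbound h1mem hg0 hx
    exact this
  -- rewrite h and deriv
  have hhx : h x y = ∑' n, g n x := rfl
  have hderiv_eq : deriv (fun t => h t y) x = ∑' n, g' n x := hD.deriv
  rw [hhx, hderiv_eq]
  -- combine: nu * ∑ g + mu*(x-1) * ∑ g' = ∑ (nu * g + mu*(x-1)*g')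
  rw [← tsum_mul_left, ← tsum_mul_left,
    ← Summable.tsum_add (hsumg.mul_left nu) (hsumg'.mul_left (mu * (x - 1)))]
  -- termwise identity
  have hterm : ∀ n : ℕ,
      nu * g n x + mu * (x - 1) * g' n x =
        nu * ((ρ * (x - 1) * (y - 1)) ^ n / Nat.factorial n) := by
    intro n
    have hne : nu + n * mu ≠ 0 := ne_of_gt (hden n)
    cases n with
    | zero => simp [hg, hg', div_self hnu.ne']
    | succ m =>
      have hA : nu / (nu + (↑(m + 1) : ℝ) * mu) * (nu + (↑(m + 1) : ℝ) * mu) = nu :=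
        div_mul_cancel₀ nu hne
      simp only [hg, hg', Nat.add_sub_cancel, mul_pow]
      push_cast at hA ⊢
      linear_combination
        (ρ ^ (m + 1) / (Nat.factorial (m + 1) : ℝ)) * (x - 1) ^ (m + 1) * (y - 1) ^ (m + 1) * hA
  rw [tsum_congr hterm, tsum_mul_left]
  congr 1
  rw [Real.exp_eq_exp_ℝ, NormedSpace.exp_eq_tsum_div]
end

section
/- Let λ, μ, ν > 0 and j a positive integer, with β = β_j(ν) ∈ (0,1) the smaller root of λz² - (λ+ν+jμ)z + jμ = 0, and β̃ = λβ/(jμ). Define f_j(z) = ν β̃ (∑_{k=0}^{j} c_{k,j} z^k) / (λ(1 - β̃ z)) with c_{k,j} as above. Then f_j satisfies the functional equation (λz² - (λ+ν+jμ)z + jμ) f_j(z) = jμ(1-z) p_j(0) - ν z^{j+1} for all real z with β̃ z ≠ 1, where p_j(0) = ν β^{j+1} / (jμ(1-β)). -/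
theorem stmt_18 (lam mu nu : ℝ) (hlam : 0 < lam) (hmu : 0 < mu) (hnu : 0 < nu)
    (j : ℕ) (hj : 0 < j) (β : ℝ) (hβ0 : 0 < β) (hβ1 : β < 1)
    (hroot : lam * β ^ 2 - (lam + nu + j * mu) * β + j * mu = 0) :
    let βt : ℝ := lam * β / (j * mu)
    let c : ℕ → ℝ := fun k =>
      if k = 0 then β ^ j / (1 - β)
      else if k ≤ j then β ^ (j - k) else 0
    let f : ℝ → ℝ := fun z =>
      nu * βt * (∑ k ∈ Finset.range (j + 1), c k * z ^ k) / (lam * (1 - βt * z))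
    let pj0 : ℝ := nu * β ^ (j + 1) / (j * mu * (1 - β))
    ∀ z : ℝ, βt * z ≠ 1 →
      (lam * z ^ 2 - (lam + nu + j * mu) * z + j * mu) * f z =
        j * mu * (1 - z) * pj0 - nu * z ^ (j + 1) := by
  intro βt c f pj0 z hz
  have hjm : (0:ℝ) < (j:ℝ) * mu := by positivity
  have hjm' : ((j:ℝ) * mu) ≠ 0 := ne_of_gt hjm
  have hβne : (1:ℝ) - β ≠ 0 := by linarith
  have h1 : (1:ℝ) - βt * z ≠ 0 := sub_ne_zero.mpr (fun h => hz h.symm)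
  have hlam' : lam ≠ 0 := ne_of_gt hlam
  have hβtdef : ((j:ℝ) * mu) * βt = lam * β := by
    show ((j:ℝ) * mu) * (lam * β / ((j:ℝ) * mu)) = lam * β
    field_simp
  -- sum identity
  have hsum : (β - z) * (∑ k ∈ Finset.range (j + 1), c k * z ^ k) * (1 - β)
      = β ^ (j + 1) * (1 - z) - z ^ (j + 1) * (1 - β) := by
    rw [Finset.sum_range_succ']
    have hck : ∀ k ∈ Finset.range j, c (k + 1) * z ^ (k + 1) = z * (z ^ k * β ^ (j - 1 - k)) := by
      intro k hk
      rw [Finset.mem_range] at hk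
      have h1k : k + 1 ≤ j := hk
      have : j - (k + 1) = j - 1 - k := by omega
      simp [c, h1k, this]
      ring
    rw [Finset.sum_congr rfl hck, ← Finset.mul_sum]
    have hg := geom_sum₂_mul z β j
    have hc0 : c 0 = β ^ j / (1 - β) := by simp [c]
    rw [hc0]
    field_simp
    linear_combination ((β - 1) * z) * hg
  -- quadratic factorization
  show (lam * z ^ 2 - (lam + nu + (j:ℝ) * mu) * z + (j:ℝ) * mu) *
      (nu * βt * (∑ k ∈ Finset.range (j + 1), c k * z ^ k) / (lam * (1 - βt * z))) =
      (j:ℝ) * mu * (1 - z) * (nu * β ^ (j + 1) / ((j:ℝ) * mu * (1 - β))) - nu * z ^ (j + 1)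
  set S := ∑ k ∈ Finset.range (j + 1), c k * z ^ k with hS
  have hβ' : β ≠ 0 := ne_of_gt hβ0
  have hQ : (lam * z ^ 2 - (lam + nu + (j:ℝ) * mu) * z + (j:ℝ) * mu) * β
      = (j:ℝ) * mu * (β - z) * (1 - βt * z) := by
    linear_combination z * hroot + (β * z - z ^ 2) * hβtdef
  have e1 : (lam * z ^ 2 - (lam + nu + (j:ℝ) * mu) * z + (j:ℝ) * mu) *
      (nu * βt * S / (lam * (1 - βt * z))) = nu * (β - z) * S := by
    rw [← mul_div_assoc, div_eq_iff (mul_ne_zero hlam' h1)]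
    have h2 : ((lam * z ^ 2 - (lam + nu + (j:ℝ) * mu) * z + (j:ℝ) * mu) * (nu * βt * S)
        - nu * (β - z) * S * (lam * (1 - βt * z))) * β = 0 := by
      linear_combination (nu * βt * S) * hQ + (nu * S * (β - z) * (1 - βt * z)) * hβtdef
    rcases mul_eq_zero.mp h2 with h | h
    · linarith [sub_eq_zero.mp h]
    · exact absurd h hβ'
  rw [e1]
  field_simp
  linear_combination hsum
end
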